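/- arXiv:1803.04124 — 4 statements merged into one kernel-verified Lean document; each statement's English description precedes it below -/
import Mathlib

section
/- Let A be a cocommutative Hopf monoid with antipode z_A and B a bimonoid in M, and let s : A → B be a bimonoid morphism. Let j : E → A be the equalizer of (1_A⊗s)∘δ_A and 1_A⊗u_B (the latter meaning ρ_A⁻¹ followed by 1_A⊗u_B). Then z_A∘j also equalizes this pair, i.e. (1_A⊗s)∘δ_A∘z_A∘j = (1_A⊗u_B)∘ρ⁻¹∘z_A∘j; consequently there is a unique morphism z' : E → E with j∘z' = z_A∘j. -/
open CategoryTheory Category MonoidalCategory Limits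

universe v u

variable {C : Type u} [Category.{v} C] [MonoidalCategory C]

/-- The middle-four interchange `(W ⊗ X) ⊗ (Y ⊗ Z) ⟶ (W ⊗ Y) ⊗ (X ⊗ Z)`,
i.e. `1 ⊗ c ⊗ 1` with the (suppressed) coherence isomorphisms inserted. -/
def mid4 [BraidedCategory C] (W X Y Z : C) :
    (W ⊗ X) ⊗ (Y ⊗ Z) ⟶ (W ⊗ Y) ⊗ (X ⊗ Z) :=
  (α_ W X (Y ⊗ Z)).hom ≫ (W ◁ (α_ X Y Z).inv) ≫
    (W ◁ ((β_ X Y).hom ▷ Z)) ≫ (W ◁ (α_ Y X Z).hom) ≫ (α_ W Y (X ⊗ Z)).inv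

/-- A monoid structure `(A, m, u)` on the object `A`. -/
structure MonObj' (A : C) where
  mul : A ⊗ A ⟶ A
  one : 𝟙_ C ⟶ A
  one_mul : (one ▷ A) ≫ mul = (λ_ A).hom
  mul_one : (A ◁ one) ≫ mul = (ρ_ A).hom
  mul_assoc : (mul ▷ A) ≫ mul = (α_ A A A).hom ≫ (A ◁ mul) ≫ mul

/-- A comonoid structure `(A, δ, ε)` on the object `A`. -/
structure ComonObj' (A : C) where
  comul : A ⟶ A ⊗ A
  counit : A ⟶ 𝟙_ C
  counit_comul : comul ≫ (counit ▷ A) = (λ_ A).inv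
  comul_counit : comul ≫ (A ◁ counit) = (ρ_ A).inv
  comul_assoc : comul ≫ (comul ▷ A) ≫ (α_ A A A).hom = comul ≫ (A ◁ comul)

/-- A bimonoid structure on the object `A`: a monoid and comonoid structure such that
the comultiplication and counit are monoid morphisms (`A ⊗ A` carrying the multiplication
`(m ⊗ m) ∘ (1 ⊗ c ⊗ 1)` and unit `u ⊗ u`). -/
structure BimonObj' [BraidedCategory C] (A : C) extends toMonObj : MonObj' A, toComonObj : ComonObj' A where
  mul_comul : mul ≫ comul = (comul ⊗ₘ comul) ≫ mid4 A A A A ≫ (mul ⊗ₘ mul)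
  one_comul : one ≫ comul = (λ_ (𝟙_ C)).inv ≫ (one ⊗ₘ one)
  mul_counit : mul ≫ counit = (counit ⊗ₘ counit) ≫ (λ_ (𝟙_ C)).hom
  one_counit : one ≫ counit = 𝟙 (𝟙_ C)

/-- `f` is a morphism of monoids. -/
def IsMonHom' {A B : C} (MA : MonObj' A) (MB : MonObj' B) (f : A ⟶ B) : Prop :=
  MA.mul ≫ f = (f ⊗ₘ f) ≫ MB.mul ∧ MA.one ≫ f = MB.one

/-- `f` is a morphism of comonoids. -/
def IsComonHom' {A B : C} (MA : ComonObj' A) (MB : ComonObj' B) (f : A ⟶ B) : Prop :=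
  f ≫ MB.comul = MA.comul ≫ (f ⊗ₘ f) ∧ f ≫ MB.counit = MA.counit

/-- `f` is a morphism of bimonoids (preserves all four structure maps). -/
def IsBimonHom' [BraidedCategory C] {A B : C} (MA : BimonObj' A) (MB : BimonObj' B)
    (f : A ⟶ B) : Prop :=
  IsMonHom' MA.toMonObj MB.toMonObj f ∧ IsComonHom' MA.toComonObj MB.toComonObj f

/-- `z` is an antipode for the bimonoid `M`, i.e. `M` is a Hopf monoid. -/
def IsAntipode [BraidedCategory C] {B : C} (M : BimonObj' B) (z : B ⟶ B) : Prop :=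
  M.comul ≫ (z ▷ B) ≫ M.mul = M.counit ≫ M.one ∧
    M.comul ≫ (B ◁ z) ≫ M.mul = M.counit ≫ M.one

/-- A comonoid is cocommutative when `c ∘ δ = δ`. -/
def IsCocomm [BraidedCategory C] {A : C} (M : ComonObj' A) : Prop :=
  M.comul ≫ (β_ A A).hom = M.comul

lemma mid4_eq_tensorμ [BraidedCategory C] (W X Y Z : C) :
    mid4 W X Y Z = tensorμ W X Y Z := rfl

/-- Package a `BimonObj'` with an antipode as a Mathlib `HopfObj`. -/
def BimonObj'.toHopfObj [BraidedCategory C] {A : C} (MA : BimonObj' A)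
    (z : A ⟶ A) (hz : IsAntipode MA z) : HopfObj A where
  one := MA.one
  mul := MA.mul
  one_mul := MA.one_mul
  mul_one := MA.mul_one
  mul_assoc := MA.mul_assoc
  counit := MA.counit
  comul := MA.comul
  counit_comul := MA.counit_comul
  comul_counit := MA.comul_counit
  comul_assoc := MA.comul_assoc.symm
  mul_comul := MA.mul_comul
  one_comul := MA.one_comul
  mul_counit := MA.mul_counit
  one_counit := MA.one_counit
  antipode := z
  antipode_left := hz.1
  antipode_right := hz.2

/-- In the cocommutative case, the antipode is a morphism of comonoids:
`δ ∘ z = (z ⊗ z) ∘ δ`. -/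
lemma antipode_comul_of_cocomm [BraidedCategory C] {A : C} (MA : BimonObj' A)
    (z : A ⟶ A) (hz : IsAntipode MA z) (hcoc : IsCocomm MA.toComonObj) :
    z ≫ MA.comul = MA.comul ≫ (z ⊗ₘ z) := by
  have h : z ≫ MA.comul = MA.comul ≫ (β_ A A).hom ≫ (z ⊗ₘ z) := by
    letI := MA.toHopfObj z hz; exact HopfObj.antipode_comul A
  rw [h, ← Category.assoc, hcoc]

theorem statement1 [SymmetricCategory C] {A B E : C}
    (MA : BimonObj' A) (MB : BimonObj' B) (zA : A ⟶ A) (hzA : IsAntipode MA zA)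
    (hcoc : IsCocomm MA.toComonObj)
    (s : A ⟶ B) (hs : IsBimonHom' MA MB s)
    (j : E ⟶ A)
    (hw : j ≫ (MA.comul ≫ (A ◁ s)) = j ≫ ((ρ_ A).inv ≫ (A ◁ MB.one)))
    (hE : IsLimit (Fork.ofι j hw)) :
    ((j ≫ zA) ≫ (MA.comul ≫ (A ◁ s)) = (j ≫ zA) ≫ ((ρ_ A).inv ≫ (A ◁ MB.one))) ∧
    ∃! z' : E ⟶ E, z' ≫ j = j ≫ zA := by
  obtain ⟨⟨hsm, hsu⟩, _⟩ := hs
  obtain ⟨hzl, hzr⟩ := hzA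
  have hc : MA.comul ≫ (β_ A A).hom = MA.comul := hcoc
  set δ := MA.comul with hδ
  -- antipode is a comonoid morphism (cocommutativity)
  have hzδ : zA ≫ δ = δ ≫ (zA ⊗ₘ zA) :=
    antipode_comul_of_cocomm MA zA ⟨hzl, hzr⟩ hcoc
  -- `s` applied on the third leg of the double comultiplication
  have K' : j ≫ δ ≫ (A ◁ (δ ≫ (A ◁ s)))
      = j ≫ δ ≫ (A ◁ ((ρ_ A).inv ≫ (A ◁ MB.one))) := by
    have assoc3 : δ ≫ (A ◁ δ) = δ ≫ (δ ▷ A) ≫ (α_ A A A).hom := MA.comul_assoc.symm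
    calc j ≫ δ ≫ (A ◁ (δ ≫ (A ◁ s)))
        = j ≫ (δ ≫ (A ◁ δ)) ≫ (A ◁ (A ◁ s)) := by
          simp [MonoidalCategory.whiskerLeft_comp]
      _ = j ≫ δ ≫ (δ ▷ A) ≫ (α_ A A A).hom ≫ (A ◁ (A ◁ s)) := by
          rw [assoc3]; simp
      _ = j ≫ δ ≫ (δ ▷ A) ≫ ((A ⊗ A) ◁ s) ≫ (α_ A A B).hom := by
          rw [associator_naturality_right]
      _ = j ≫ (δ ≫ (A ◁ s)) ≫ (δ ▷ B) ≫ (α_ A A B).hom := by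
          simp only [Category.assoc]
          rw [← whisker_exchange_assoc]
      _ = j ≫ ((ρ_ A).inv ≫ (A ◁ MB.one)) ≫ (δ ▷ B) ≫ (α_ A A B).hom := by
          simp only [Category.assoc]
          rw [reassoc_of% hw]
      _ = j ≫ (ρ_ A).inv ≫ (δ ▷ (𝟙_ C)) ≫ ((A ⊗ A) ◁ MB.one) ≫ (α_ A A B).hom := by
          simp only [Category.assoc]
          rw [← whisker_exchange_assoc]
      _ = j ≫ δ ≫ (ρ_ (A ⊗ A)).inv ≫ ((A ⊗ A) ◁ MB.one) ≫ (α_ A A B).hom := by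
          rw [← rightUnitor_inv_naturality_assoc]
      _ = j ≫ δ ≫ (ρ_ (A ⊗ A)).inv ≫ (α_ A A (𝟙_ C)).hom ≫ (A ◁ (A ◁ MB.one)) := by
          rw [associator_naturality_right]
      _ = j ≫ δ ≫ (A ◁ (ρ_ A).inv) ≫ (A ◁ (A ◁ MB.one)) := by
          congr 2
          rw [← Category.assoc]
          congr 1
          monoidal
      _ = j ≫ δ ≫ (A ◁ ((ρ_ A).inv ≫ (A ◁ MB.one))) := by
          simp [MonoidalCategory.whiskerLeft_comp]
  -- `s` applied on the second leg of the double comultiplication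
  have K : j ≫ δ ≫ (A ◁ (δ ≫ (s ▷ A)))
      = j ≫ δ ≫ (A ◁ ((λ_ A).inv ≫ (MB.one ▷ A))) := by
    have e1 : δ ≫ (s ▷ A) = (δ ≫ (A ◁ s)) ≫ (β_ A B).hom := by
      conv_lhs => rw [← hc]
      rw [Category.assoc, ← BraidedCategory.braiding_naturality_right]
      simp
    have hβ : (β_ A (𝟙_ C)).hom = (ρ_ A).hom ≫ (λ_ A).inv := by
      rw [← braiding_leftUnitor A]; simp
    have e2 : (λ_ A).inv ≫ (MB.one ▷ A) = ((ρ_ A).inv ≫ (A ◁ MB.one)) ≫ (β_ A B).hom := by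
      rw [Category.assoc, BraidedCategory.braiding_naturality_right, hβ]
      simp
    rw [e1, e2]
    have := congrArg (fun t => t ≫ (A ◁ (β_ A B).hom)) K'
    simpa only [MonoidalCategory.whiskerLeft_comp, Category.assoc] using this
  -- `s ∘ z` also satisfies the equalizing relation on the second leg
  have dia : j ≫ δ ≫ (A ◁ (zA ≫ s)) = j ≫ (ρ_ A).inv ≫ (A ◁ MB.one) := by
    have inner1 : (λ_ A).inv ≫ (MB.one ▷ A) ≫ ((B ◁ (zA ≫ s)) ≫ MB.mul) = zA ≫ s := by
      rw [← whisker_exchange_assoc, MB.one_mul]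
      simp
    have inner2 : δ ≫ (s ▷ A) ≫ ((B ◁ (zA ≫ s)) ≫ MB.mul) = MA.counit ≫ MB.one := by
      have h1 : (s ▷ A) ≫ (B ◁ (zA ≫ s)) = (A ◁ zA) ≫ (s ⊗ₘ s) := by
        rw [tensorHom_def', ← whisker_exchange]
        simp [MonoidalCategory.whiskerLeft_comp]
      rw [reassoc_of% h1, ← hsm, reassoc_of% hzr, hsu]
    have hδε : δ ≫ (A ◁ MA.counit) = (ρ_ A).inv := MA.comul_counit
    calc j ≫ δ ≫ (A ◁ (zA ≫ s))
        = j ≫ δ ≫ (A ◁ ((λ_ A).inv ≫ (MB.one ▷ A) ≫ ((B ◁ (zA ≫ s)) ≫ MB.mul))) := by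
          rw [inner1]
      _ = j ≫ δ ≫ (A ◁ (δ ≫ (s ▷ A) ≫ ((B ◁ (zA ≫ s)) ≫ MB.mul))) := by
          simp only [MonoidalCategory.whiskerLeft_comp, Category.assoc]
          simp only [MonoidalCategory.whiskerLeft_comp, Category.assoc] at K
          rw [reassoc_of% K]
      _ = j ≫ δ ≫ (A ◁ (MA.counit ≫ MB.one)) := by
          rw [inner2]
      _ = j ≫ (ρ_ A).inv ≫ (A ◁ MB.one) := by
          simp only [MonoidalCategory.whiskerLeft_comp]
          rw [reassoc_of% hδε]
  -- the first statement
  have hts : (zA ⊗ₘ zA) ≫ (A ◁ s) = (A ◁ (zA ≫ s)) ≫ (zA ▷ B) := by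
    rw [tensorHom_def', Category.assoc, ← whisker_exchange]
    simp [MonoidalCategory.whiskerLeft_comp]
  have heq : (j ≫ zA) ≫ (δ ≫ (A ◁ s)) = (j ≫ zA) ≫ ((ρ_ A).inv ≫ (A ◁ MB.one)) := by
    calc (j ≫ zA) ≫ (δ ≫ (A ◁ s))
        = j ≫ (zA ≫ δ) ≫ (A ◁ s) := by simp
      _ = j ≫ δ ≫ ((zA ⊗ₘ zA) ≫ (A ◁ s)) := by rw [hzδ]; simp
      _ = j ≫ δ ≫ (A ◁ (zA ≫ s)) ≫ (zA ▷ B) := by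
          rw [hts]
      _ = (j ≫ (ρ_ A).inv ≫ (A ◁ MB.one)) ≫ (zA ▷ B) := by
          simp only [Category.assoc]
          rw [reassoc_of% dia]
      _ = j ≫ zA ≫ (ρ_ A).inv ≫ (A ◁ MB.one) := by
          conv_rhs => rw [rightUnitor_inv_naturality_assoc, ← whisker_exchange]
          simp only [Category.assoc]
      _ = (j ≫ zA) ≫ ((ρ_ A).inv ≫ (A ◁ MB.one)) := by simp
  refine ⟨heq, ?_⟩
  obtain ⟨l, hl⟩ := Fork.IsLimit.lift' hE (j ≫ zA) heq
  refine ⟨l, hl, ?_⟩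
  intro y hy
  apply Fork.IsLimit.hom_ext hE
  simpa using hy.trans hl.symm
end

section
/- Let A and B be bimonoids in M with B a Hopf monoid with antipode z, let t : A → B be a comonoid morphism and i : B → A a monoid morphism. Then for any two morphisms φ, ψ : A⊗A → A the following are equivalent: (i) ψ = m_A∘((i∘t)⊗φ)∘(δ_A⊗1_A) (that is, ψ equals the composite (δ_A⊗1_A) : A⊗A → A⊗A⊗A, followed by (i∘t) on the first factor and φ on the last two, followed by m_A); (ii) φ = m_A∘((i∘z∘t)⊗ψ)∘(δ_A⊗1_A). -/
open CategoryTheory Category MonoidalCategory Limits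

universe v u

variable {C : Type u} [Category.{v} C] [MonoidalCategory C]

private lemma key' {A : C} (Mo : MonObj' A) (Co : ComonObj' A) (f g : A ⟶ A) (χ : A ⊗ A ⟶ A) :
    (Co.comul ▷ A) ≫ (α_ A A A).hom ≫
      (g ⊗ₘ ((Co.comul ▷ A) ≫ (α_ A A A).hom ≫ (f ⊗ₘ χ) ≫ Mo.mul)) ≫ Mo.mul =
    (Co.comul ▷ A) ≫ (α_ A A A).hom ≫
      ((Co.comul ≫ (g ⊗ₘ f) ≫ Mo.mul) ⊗ₘ χ) ≫ Mo.mul := by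
  calc (Co.comul ▷ A) ≫ (α_ A A A).hom ≫
      (g ⊗ₘ ((Co.comul ▷ A) ≫ (α_ A A A).hom ≫ (f ⊗ₘ χ) ≫ Mo.mul)) ≫ Mo.mul
      = (Co.comul ▷ A) ≫ (α_ A A A).hom ≫ (A ◁ (Co.comul ▷ A)) ≫ (A ◁ (α_ A A A).hom) ≫
          (g ⊗ₘ ((f ⊗ₘ χ) ≫ Mo.mul)) ≫ Mo.mul := by
        simp only [tensorHom_def' g, MonoidalCategory.whiskerLeft_comp, assoc]
    _ = (Co.comul ▷ A) ≫ ((Co.comul ▷ A) ▷ A) ≫ ((α_ A A A).hom ▷ A) ≫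
          (α_ A (A ⊗ A) A).hom ≫ (A ◁ (α_ A A A).hom) ≫
          (g ⊗ₘ ((f ⊗ₘ χ) ≫ Mo.mul)) ≫ Mo.mul := by
        rw [← associator_naturality_middle_assoc, ← comp_whiskerRight_assoc,
            ← Co.comul_assoc]
        simp only [comp_whiskerRight, assoc]
    _ = (Co.comul ▷ A) ≫ ((Co.comul ▷ A) ▷ A) ≫ (α_ (A ⊗ A) A A).hom ≫
          (α_ A A (A ⊗ A)).hom ≫ (g ⊗ₘ ((f ⊗ₘ χ) ≫ Mo.mul)) ≫ Mo.mul := by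
        rw [pentagon_assoc]
    _ = (Co.comul ▷ A) ≫ ((Co.comul ▷ A) ▷ A) ≫ (α_ (A ⊗ A) A A).hom ≫
          (α_ A A (A ⊗ A)).hom ≫ (g ⊗ₘ (f ⊗ₘ χ)) ≫ (A ◁ Mo.mul) ≫ Mo.mul := by
        rw [show (g ⊗ₘ ((f ⊗ₘ χ) ≫ Mo.mul)) = (g ⊗ₘ (f ⊗ₘ χ)) ≫ (A ◁ Mo.mul) by
          rw [← id_tensorHom, tensorHom_comp_tensorHom, comp_id]]
        simp only [assoc]
    _ = (Co.comul ▷ A) ≫ ((Co.comul ▷ A) ▷ A) ≫ (α_ (A ⊗ A) A A).hom ≫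
          ((g ⊗ₘ f) ⊗ₘ χ) ≫ (Mo.mul ▷ A) ≫ Mo.mul := by
        rw [← associator_naturality_assoc, Mo.mul_assoc]
    _ = (Co.comul ▷ A) ≫ (α_ A A A).hom ≫
          ((Co.comul ≫ (g ⊗ₘ f) ≫ Mo.mul) ⊗ₘ χ) ≫ Mo.mul := by
        rw [show ((Co.comul ≫ (g ⊗ₘ f) ≫ Mo.mul) ⊗ₘ χ)
            = (Co.comul ⊗ₘ 𝟙 (A ⊗ A)) ≫ ((g ⊗ₘ f) ⊗ₘ χ) ≫ (Mo.mul ⊗ₘ 𝟙 A) by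
          rw [tensorHom_comp_tensorHom_assoc, tensorHom_comp_tensorHom, id_comp, comp_id, assoc]]
        simp only [tensorHom_id, assoc]
        rw [associator_naturality_left_assoc]

private lemma counit_one' {A : C} (Mo : MonObj' A) (Co : ComonObj' A) (χ : A ⊗ A ⟶ A) :
    (Co.comul ▷ A) ≫ (α_ A A A).hom ≫ ((Co.counit ≫ Mo.one) ⊗ₘ χ) ≫ Mo.mul = χ := by
  rw [show ((Co.counit ≫ Mo.one) ⊗ₘ χ) = (Co.counit ⊗ₘ χ) ≫ (Mo.one ⊗ₘ 𝟙 A) by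
    rw [tensorHom_comp_tensorHom, comp_id]]
  simp only [tensorHom_id, assoc, Mo.one_mul]
  rw [tensorHom_def Co.counit χ]
  simp only [assoc]
  rw [leftUnitor_naturality, ← associator_naturality_left_assoc,
      ← comp_whiskerRight_assoc, Co.counit_comul]
  simp

private lemma cancel' {A : C} (Mo : MonObj' A) (Co : ComonObj' A) (f g : A ⟶ A) (χ : A ⊗ A ⟶ A)
    (h : Co.comul ≫ (g ⊗ₘ f) ≫ Mo.mul = Co.counit ≫ Mo.one) :
    (Co.comul ▷ A) ≫ (α_ A A A).hom ≫
      (g ⊗ₘ ((Co.comul ▷ A) ≫ (α_ A A A).hom ≫ (f ⊗ₘ χ) ≫ Mo.mul)) ≫ Mo.mul = χ := by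
  rw [key', h, counit_one']

theorem statement3 [SymmetricCategory C] {A B : C}
    (MA : BimonObj' A) (MB : BimonObj' B) (z : B ⟶ B) (hz : IsAntipode MB z)
    (t : A ⟶ B) (ht : IsComonHom' MA.toComonObj MB.toComonObj t)
    (i : B ⟶ A) (hi : IsMonHom' MB.toMonObj MA.toMonObj i)
    (φ ψ : A ⊗ A ⟶ A) :
    ψ = (MA.comul ▷ A) ≫ (α_ A A A).hom ≫ ((t ≫ i) ⊗ₘ φ) ≫ MA.mul ↔
    φ = (MA.comul ▷ A) ≫ (α_ A A A).hom ≫ ((t ≫ z ≫ i) ⊗ₘ ψ) ≫ MA.mul := by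
  have hconv : ∀ (p q : B ⟶ B), MB.comul ≫ (p ⊗ₘ q) ≫ MB.mul = MB.counit ≫ MB.one →
      MA.comul ≫ ((t ≫ p ≫ i) ⊗ₘ (t ≫ q ≫ i)) ≫ MA.mul = MA.counit ≫ MA.one := by
    intro p q hpq
    rw [show ((t ≫ p ≫ i) ⊗ₘ (t ≫ q ≫ i)) = (t ⊗ₘ t) ≫ (p ⊗ₘ q) ≫ (i ⊗ₘ i) by
      rw [tensorHom_comp_tensorHom, tensorHom_comp_tensorHom]]
    simp only [assoc]
    slice_lhs 1 2 => rw [← ht.1]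
    slice_lhs 4 5 => rw [← hi.1]
    slice_lhs 2 4 => rw [hpq]
    slice_lhs 1 2 => rw [ht.2]
    slice_lhs 2 3 => rw [hi.2]
  have hgf : MA.comul ≫ ((t ≫ z ≫ i) ⊗ₘ (t ≫ i)) ≫ MA.mul = MA.counit ≫ MA.one := by
    have := hconv z (𝟙 B) (by simpa [tensorHom_id, MonoidalCategory.tensorHom_def] using hz.1)
    simpa using this
  have hfg : MA.comul ≫ ((t ≫ i) ⊗ₘ (t ≫ z ≫ i)) ≫ MA.mul = MA.counit ≫ MA.one := by
    have := hconv (𝟙 B) z (by simpa [id_tensorHom] using hz.2)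
    simpa using this
  constructor
  · intro h
    rw [h]
    exact (cancel' MA.toMonObj MA.toComonObj (t ≫ i) (t ≫ z ≫ i) φ hgf).symm
  · intro h
    rw [h]
    exact (cancel' MA.toMonObj MA.toComonObj (t ≫ z ≫ i) (t ≫ i) ψ hfg).symm
end

section
/- Let A be a bimonoid and B a Hopf monoid with antipode z in M; let s, t : A → B and i : B → A be bimonoid morphisms with s∘i = 1_B and t∘i = 1_B, satisfying c∘(s⊗1_A)∘δ_A = (1_A⊗s)∘δ_A and (t⊗1_A)∘δ_A = (t⊗1_A)∘c∘δ_A. Set ⃗s := m_A∘(1_A⊗(i∘z∘s))∘δ_A and ⃖t := m_A∘((i∘z∘t)⊗1_A)∘δ_A. Then the equation m_A∘(1_A⊗⃗s) = m_A∘(1_A⊗m_A)∘(1_A⊗⃗s⊗⃖t)∘(1_A⊗c_{A,A})∘((i∘t)⊗1_A⊗1_A)∘(δ_A⊗1_A) of morphisms A⊗A → A holds if and only if m_A∘c∘(⃗s⊗⃖t) = m_A∘(⃗s⊗⃖t). -/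
open CategoryTheory Category MonoidalCategory Limits

universe v u

variable {C : Type u} [Category.{v} C] [MonoidalCategory C]

/-- `f` is a morphism of monoids. -/
def IsMonHom {A B : C} (MA : MonObj' A) (MB : MonObj' B) (f : A ⟶ B) : Prop :=
  MA.mul ≫ f = (f ⊗ₘ f) ≫ MB.mul ∧ MA.one ≫ f = MB.one

/-- `f` is a morphism of comonoids. -/
def IsComonHom {A B : C} (MA : ComonObj' A) (MB : ComonObj' B) (f : A ⟶ B) : Prop :=
  f ≫ MB.comul = MA.comul ≫ (f ⊗ₘ f) ∧ f ≫ MB.counit = MA.counit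

/-- `f` is a morphism of bimonoids (preserves all four structure maps). -/
def IsBimonHom [BraidedCategory C] {A B : C} (MA : BimonObj' A) (MB : BimonObj' B)
    (f : A ⟶ B) : Prop :=
  IsMonHom MA.toMonObj MB.toMonObj f ∧ IsComonHom MA.toComonObj MB.toComonObj f

open ComonObj

/-! ### Auxiliary machinery for `statement7`. -/

/-- Bundle a `ComonObj` as one of mathlib's `Comon_` objects. -/
def ComonObj'.toComon' {A : C} (M : ComonObj' A) : CategoryTheory.ComonObj A where
  counit := M.counit
  comul := M.comul
  counit_comul := M.counit_comul
  comul_counit := M.comul_counit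
  comul_assoc := M.comul_assoc.symm

/-- Bundle a `MonObj` as one of mathlib's `Mon_` objects. -/
def MonObj'.toMon' {A : C} (M : MonObj' A) : CategoryTheory.MonObj A where
  one := M.one
  mul := M.mul
  one_mul := M.one_mul
  mul_one := M.mul_one
  mul_assoc := M.mul_assoc

/-- The convolution product of two morphisms from a comonoid to a monoid. -/
def cnv {X Y : C} (CX : ComonObj' X) (MY : MonObj' Y) (f g : X ⟶ Y) : X ⟶ Y :=
  CX.comul ≫ (f ⊗ₘ g) ≫ MY.mul

lemma cnv_eq {X Y : C} (CX : ComonObj' X) (MY : MonObj' Y) (f g : X ⟶ Y) :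
    cnv CX MY f g = @HMul.hMul (Conv X Y) (Conv X Y) (Conv X Y)
      (@instHMul _ (@Conv.instMul C _ _ X Y CX.toComon' MY.toMon')) f g := by
  show CX.comul ≫ (f ⊗ₘ g) ≫ MY.mul =
    CX.comul ≫ (f ▷ X) ≫ (Y ◁ g) ≫ MY.mul
  simp [MonoidalCategory.tensorHom_def]

lemma cnv_assoc {X Y : C} (CX : ComonObj' X) (MY : MonObj' Y) (f g h : X ⟶ Y) :
    cnv CX MY (cnv CX MY f g) h = cnv CX MY f (cnv CX MY g h) := by
  rw [cnv_eq, cnv_eq, cnv_eq, cnv_eq]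
  letI := CX.toComon'
  letI := MY.toMon'
  exact _root_.mul_assoc (G := Conv X Y) f g h

lemma cnv_one_left {X Y : C} (CX : ComonObj' X) (MY : MonObj' Y) (f : X ⟶ Y) :
    cnv CX MY (CX.counit ≫ MY.one) f = f := by
  rw [cnv_eq]
  letI := CX.toComon'
  letI := MY.toMon'
  exact _root_.one_mul (M := Conv X Y) f

lemma cnv_precomp {W X Y : C} {CW : ComonObj' W} {CX : ComonObj' X} (MY : MonObj' Y)
    {h : W ⟶ X} (hh : IsComonHom CW CX h) (f g : X ⟶ Y) :
    h ≫ cnv CX MY f g = cnv CW MY (h ≫ f) (h ≫ g) := by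
  rw [cnv, cnv, reassoc_of% hh.1, tensorHom_comp_tensorHom_assoc]

lemma cnv_postcomp {X Y Z : C} (CX : ComonObj' X) {MY : MonObj' Y} {MZ : MonObj' Z}
    {k : Y ⟶ Z} (hk : IsMonHom MY MZ k) (f g : X ⟶ Y) :
    cnv CX MY f g ≫ k = cnv CX MZ (f ≫ k) (g ≫ k) := by
  rw [cnv, cnv, Category.assoc, Category.assoc, hk.1, tensorHom_comp_tensorHom_assoc]

section TensorComon

variable [BraidedCategory C]

/-- The tensor product of two comonoids. -/
def tensorComonObj {A B : C} (CA : ComonObj' A) (CB : ComonObj' B) :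
    ComonObj' (A ⊗ B) :=
  letI := CA.toComon'
  letI := CB.toComon'
  { comul := Δ[A ⊗ B]
    counit := ε[A ⊗ B]
    counit_comul := ComonObj.counit_comul _
    comul_counit := ComonObj.comul_counit _
    comul_assoc := (ComonObj.comul_assoc _).symm }

lemma tensorComonObj_comul {A B : C} (CA : ComonObj' A) (CB : ComonObj' B) :
    (tensorComonObj CA CB).comul = (CA.comul ⊗ₘ CB.comul) ≫ tensorμ A A B B :=
  letI := CA.toComon'
  letI := CB.toComon'
  Comon.tensorObj_comul A B

lemma tensorComonObj_counit {A B : C} (CA : ComonObj' A) (CB : ComonObj' B) :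
    (tensorComonObj CA CB).counit = (CA.counit ⊗ₘ CB.counit) ≫ (λ_ (𝟙_ C)).hom :=
  rfl

lemma tensorMu_fst {A B : C} (dA : A ⟶ A ⊗ A) (dB : B ⟶ B ⊗ B) (eB : B ⟶ 𝟙_ C)
    (hB : dB ≫ (eB ▷ B) = (λ_ B).inv) :
    (dA ⊗ₘ dB) ≫ tensorμ A A B B ≫ (((A ◁ eB) ≫ (ρ_ A).hom) ▷ (A ⊗ B)) =
      (dA ▷ B) ≫ (α_ A A B).hom := by
  rw [comp_whiskerRight]
  have h1 : tensorμ A A B B ≫ ((A ◁ eB) ▷ (A ⊗ B)) =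
      ((𝟙 A ⊗ₘ 𝟙 A) ⊗ₘ (eB ⊗ₘ 𝟙 B)) ≫ tensorμ A A (𝟙_ C) B := by
    simpa using (tensorμ_natural (𝟙 A) (𝟙 A) eB (𝟙 B)).symm
  have key : ((A ⊗ A) ◁ (λ_ B).inv) ≫ tensorμ A A (𝟙_ C) B ≫ ((ρ_ A).hom ▷ (A ⊗ B)) =
      (α_ A A B).hom := by
    simp only [tensorμ, braiding_tensorUnit_right]
    monoidal
  rw [reassoc_of% h1, tensorHom_comp_tensorHom_assoc]
  simp only [id_tensorHom_id, comp_id, tensorHom_id]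
  rw [hB, MonoidalCategory.tensorHom_def]
  simp only [Category.assoc]
  rw [key]
  simp

lemma tensorMu_snd {A B : C} (dA : A ⟶ A ⊗ A) (dB : B ⟶ B ⊗ B) (eA : A ⟶ 𝟙_ C)
    (hA : dA ≫ (eA ▷ A) = (λ_ A).inv) :
    (dA ⊗ₘ dB) ≫ tensorμ A A B B ≫ (((eA ▷ B) ≫ (λ_ B).hom) ▷ (A ⊗ B)) =
      (A ◁ dB) ≫ (α_ A B B).inv ≫ ((β_ A B).hom ▷ B) ≫ (α_ B A B).hom := by
  rw [comp_whiskerRight]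
  have h1 : tensorμ A A B B ≫ ((eA ▷ B) ▷ (A ⊗ B)) =
      ((eA ⊗ₘ 𝟙 A) ⊗ₘ (𝟙 B ⊗ₘ 𝟙 B)) ≫ tensorμ (𝟙_ C) A B B := by
    simpa using (tensorμ_natural eA (𝟙 A) (𝟙 B) (𝟙 B)).symm
  have key : ((λ_ A).inv ▷ (B ⊗ B)) ≫ tensorμ (𝟙_ C) A B B ≫ ((λ_ B).hom ▷ (A ⊗ B)) =
      (α_ A B B).inv ≫ ((β_ A B).hom ▷ B) ≫ (α_ B A B).hom := by
    simp only [tensorμ]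
    monoidal
  rw [reassoc_of% h1, tensorHom_comp_tensorHom_assoc]
  simp only [id_tensorHom_id, comp_id, tensorHom_id]
  rw [hA, tensorHom_def']
  simp only [Category.assoc]
  rw [key]
  simp

lemma tensorMu_pq {A B : C} (dA : A ⟶ A ⊗ A) (dB : B ⟶ B ⊗ B)
    (eA : A ⟶ 𝟙_ C) (eB : B ⟶ 𝟙_ C)
    (hA : dA ≫ (A ◁ eA) = (ρ_ A).inv) (hB : dB ≫ (eB ▷ B) = (λ_ B).inv) :
    (dA ⊗ₘ dB) ≫ tensorμ A A B B ≫
      (((A ◁ eB) ≫ (ρ_ A).hom) ⊗ₘ ((eA ▷ B) ≫ (λ_ B).hom)) = 𝟙 (A ⊗ B) := by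
  have h1 : tensorμ A A B B ≫ ((A ◁ eB) ⊗ₘ (eA ▷ B)) =
      ((𝟙 A ⊗ₘ eA) ⊗ₘ (eB ⊗ₘ 𝟙 B)) ≫ tensorμ A (𝟙_ C) (𝟙_ C) B := by
    simpa using (tensorμ_natural (𝟙 A) eA eB (𝟙 B)).symm
  have key : ((ρ_ A).inv ⊗ₘ (λ_ B).inv) ≫ tensorμ A (𝟙_ C) (𝟙_ C) B ≫
      ((ρ_ A).hom ⊗ₘ (λ_ B).hom) = 𝟙 (A ⊗ B) := by
    simp only [tensorμ, braiding_tensorUnit_right, braiding_tensorUnit_left]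
    monoidal
  rw [← tensorHom_comp_tensorHom, reassoc_of% h1, tensorHom_comp_tensorHom_assoc]
  simp only [id_tensorHom, tensorHom_id] at hA hB ⊢
  rw [hA, hB]
  simpa using key

lemma tensorMu_qp {A B : C} (dA : A ⟶ A ⊗ A) (dB : B ⟶ B ⊗ B)
    (eA : A ⟶ 𝟙_ C) (eB : B ⟶ 𝟙_ C)
    (hA : dA ≫ (eA ▷ A) = (λ_ A).inv) (hB : dB ≫ (B ◁ eB) = (ρ_ B).inv) :
    (dA ⊗ₘ dB) ≫ tensorμ A A B B ≫
      (((eA ▷ B) ≫ (λ_ B).hom) ⊗ₘ ((A ◁ eB) ≫ (ρ_ A).hom)) = (β_ A B).hom := by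
  have h1 : tensorμ A A B B ≫ ((eA ▷ B) ⊗ₘ (A ◁ eB)) =
      ((eA ⊗ₘ 𝟙 A) ⊗ₘ (𝟙 B ⊗ₘ eB)) ≫ tensorμ (𝟙_ C) A B (𝟙_ C) := by
    simpa using (tensorμ_natural eA (𝟙 A) (𝟙 B) eB).symm
  have key : ((λ_ A).inv ⊗ₘ (ρ_ B).inv) ≫ tensorμ (𝟙_ C) A B (𝟙_ C) ≫
      ((λ_ B).hom ⊗ₘ (ρ_ A).hom) = (β_ A B).hom := by
    simp only [tensorμ]
    monoidal
  rw [← tensorHom_comp_tensorHom, reassoc_of% h1, tensorHom_comp_tensorHom_assoc]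
  simp only [id_tensorHom, tensorHom_id] at hA hB ⊢
  rw [hA, hB]
  simpa using key

end TensorComon

section Projections

variable [BraidedCategory C]

/-- First projection `A ⊗ A ⟶ A` via the counit. -/
def pfst {A : C} (cA : ComonObj' A) : A ⊗ A ⟶ A := (A ◁ cA.counit) ≫ (ρ_ A).hom

/-- Second projection `A ⊗ A ⟶ A` via the counit. -/
def qsnd {A : C} (cA : ComonObj' A) : A ⊗ A ⟶ A := (cA.counit ▷ A) ≫ (λ_ A).hom

variable {A : C} (cA : ComonObj' A)

lemma comul_pfst_whisker :
    (tensorComonObj cA cA).comul ≫ (pfst cA ▷ (A ⊗ A)) =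
      (cA.comul ▷ A) ≫ (α_ A A A).hom := by
  rw [tensorComonObj_comul]
  simp only [Category.assoc]
  exact tensorMu_fst cA.comul cA.comul cA.counit cA.counit_comul

lemma comul_pq :
    (tensorComonObj cA cA).comul ≫ (pfst cA ⊗ₘ qsnd cA) = 𝟙 (A ⊗ A) := by
  rw [tensorComonObj_comul]
  simp only [Category.assoc]
  exact tensorMu_pq cA.comul cA.comul cA.counit cA.counit
    cA.comul_counit cA.counit_comul

lemma comul_qp :
    (tensorComonObj cA cA).comul ≫ (qsnd cA ⊗ₘ pfst cA) = (β_ A A).hom := by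
  rw [tensorComonObj_comul]
  simp only [Category.assoc]
  exact tensorMu_qp cA.comul cA.comul cA.counit cA.counit
    cA.counit_comul cA.comul_counit

lemma pfst_counit : pfst cA ≫ cA.counit = (tensorComonObj cA cA).counit := by
  rw [tensorComonObj_counit, pfst, tensorHom_def']
  simp only [Category.assoc]
  rw [← rightUnitor_naturality]
  simp [unitors_equal]

lemma pfst_comul :
    pfst cA ≫ cA.comul = (tensorComonObj cA cA).comul ≫ (pfst cA ⊗ₘ pfst cA) := by
  rw [MonoidalCategory.tensorHom_def, reassoc_of% comul_pfst_whisker cA]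
  rw [show ((A : C) ◁ pfst cA) = (A ◁ (A ◁ cA.counit)) ≫ (A ◁ (ρ_ A).hom) from by
    rw [pfst, MonoidalCategory.whiskerLeft_comp]]
  rw [← associator_naturality_right_assoc, ← rightUnitor_tensor_hom, ← whisker_exchange_assoc,
    rightUnitor_naturality, pfst]
  simp

lemma pfst_isComonHom : IsComonHom (tensorComonObj cA cA) cA (pfst cA) :=
  ⟨pfst_comul cA, pfst_counit cA⟩

variable (mA : MonObj' A)

lemma cnv_p_q (g : A ⟶ A) :
    cnv (tensorComonObj cA cA) mA (pfst cA) (qsnd cA ≫ g) = (A ◁ g) ≫ mA.mul := by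
  rw [cnv, show pfst cA ⊗ₘ (qsnd cA ≫ g) = (pfst cA ⊗ₘ qsnd cA) ≫ (𝟙 A ⊗ₘ g) from by
    rw [tensorHom_comp_tensorHom, comp_id]]
  simp only [Category.assoc]
  rw [reassoc_of% comul_pq cA, id_tensorHom]

lemma cnv_pf_qg (f g : A ⟶ A) :
    cnv (tensorComonObj cA cA) mA (pfst cA ≫ f) (qsnd cA ≫ g) = (f ⊗ₘ g) ≫ mA.mul := by
  rw [cnv, ← tensorHom_comp_tensorHom]
  simp only [Category.assoc]
  rw [reassoc_of% comul_pq cA]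

lemma cnv_qg_pf (f g : A ⟶ A) :
    cnv (tensorComonObj cA cA) mA (qsnd cA ≫ g) (pfst cA ≫ f) =
      (f ⊗ₘ g) ≫ (β_ A A).hom ≫ mA.mul := by
  rw [cnv, ← tensorHom_comp_tensorHom]
  simp only [Category.assoc]
  rw [reassoc_of% comul_qp cA, ← BraidedCategory.braiding_naturality_assoc]

lemma cnv_big (f g h : A ⟶ A) :
    cnv (tensorComonObj cA cA) mA (pfst cA ≫ f)
        (cnv (tensorComonObj cA cA) mA (qsnd cA ≫ g) (pfst cA ≫ h)) =
      (cA.comul ▷ A) ≫ ((f ▷ A) ▷ A) ≫ (α_ A A A).hom ≫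
        (A ◁ (β_ A A).hom) ≫ (A ◁ (g ⊗ₘ h)) ≫ (A ◁ mA.mul) ≫ mA.mul := by
  rw [cnv_qg_pf cA mA h g, BraidedCategory.braiding_naturality_assoc]
  rw [cnv, show (pfst cA ≫ f) ⊗ₘ ((β_ A A).hom ≫ (g ⊗ₘ h) ≫ mA.mul) =
      (pfst cA ▷ (A ⊗ A)) ≫ (f ⊗ₘ ((β_ A A).hom ≫ (g ⊗ₘ h) ≫ mA.mul)) from by
    rw [← tensorHom_id, tensorHom_comp_tensorHom, id_comp]]
  simp only [Category.assoc]
  rw [reassoc_of% comul_pfst_whisker cA, MonoidalCategory.tensorHom_def]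
  simp only [Category.assoc, MonoidalCategory.whiskerLeft_comp]
  rw [← associator_naturality_left_assoc]

end Projections

section HopfLemmas

variable [BraidedCategory C] {A B : C}

lemma cnv_tzi_ti (MA : BimonObj' A) (MB : BimonObj' B) (z : B ⟶ B) (t : A ⟶ B) (i : B ⟶ A)
    (hz1 : MB.comul ≫ (z ▷ B) ≫ MB.mul = MB.counit ≫ MB.one)
    (ht : IsComonHom MA.toComonObj MB.toComonObj t)
    (hi : IsMonHom MB.toMonObj MA.toMonObj i) :
    cnv MA.toComonObj MA.toMonObj (t ≫ z ≫ i) (t ≫ i) = MA.counit ≫ MA.one := by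
  have h1 : t ≫ cnv MB.toComonObj MA.toMonObj (z ≫ i) i =
      cnv MA.toComonObj MA.toMonObj (t ≫ (z ≫ i)) (t ≫ i) := cnv_precomp _ ht _ _
  rw [← h1]
  have h2 : cnv MB.toComonObj MA.toMonObj (z ≫ i) i =
      cnv MB.toComonObj MB.toMonObj z (𝟙 B) ≫ i := by
    rw [cnv_postcomp _ hi z (𝟙 B), id_comp]
  have h3 : cnv MB.toComonObj MB.toMonObj z (𝟙 B) = MB.counit ≫ MB.one := by
    rw [cnv, tensorHom_id]; exact hz1
  rw [h2, h3]
  simp only [Category.assoc]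
  rw [hi.2, ← Category.assoc, ht.2]

lemma cnv_ti_tzi (MA : BimonObj' A) (MB : BimonObj' B) (z : B ⟶ B) (t : A ⟶ B) (i : B ⟶ A)
    (hz2 : MB.comul ≫ (B ◁ z) ≫ MB.mul = MB.counit ≫ MB.one)
    (ht : IsComonHom MA.toComonObj MB.toComonObj t)
    (hi : IsMonHom MB.toMonObj MA.toMonObj i) :
    cnv MA.toComonObj MA.toMonObj (t ≫ i) (t ≫ z ≫ i) = MA.counit ≫ MA.one := by
  have h1 : t ≫ cnv MB.toComonObj MA.toMonObj i (z ≫ i) =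
      cnv MA.toComonObj MA.toMonObj (t ≫ i) (t ≫ (z ≫ i)) := cnv_precomp _ ht _ _
  rw [← h1]
  have h2 : cnv MB.toComonObj MA.toMonObj i (z ≫ i) =
      cnv MB.toComonObj MB.toMonObj (𝟙 B) z ≫ i := by
    rw [cnv_postcomp _ hi (𝟙 B) z, id_comp]
  have h3 : cnv MB.toComonObj MB.toMonObj (𝟙 B) z = MB.counit ≫ MB.one := by
    rw [cnv, id_tensorHom]; exact hz2
  rw [h2, h3]
  simp only [Category.assoc]
  rw [hi.2, ← Category.assoc, ht.2]

lemma abstract_iff {A : C} (cA : ComonObj' A) (mA : MonObj' A) (f g S T : A ⟶ A)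
    (hT : T = cnv cA mA g (𝟙 A))
    (hFT : cnv cA mA f T = 𝟙 A)
    (hK2 : cnv cA mA g f = cA.counit ≫ mA.one) :
    (cnv (tensorComonObj cA cA) mA (pfst cA) (qsnd cA ≫ S) =
      cnv (tensorComonObj cA cA) mA (pfst cA ≫ f)
        (cnv (tensorComonObj cA cA) mA (qsnd cA ≫ S) (pfst cA ≫ T)))
    ↔ (cnv (tensorComonObj cA cA) mA (pfst cA ≫ T) (qsnd cA ≫ S) =
      cnv (tensorComonObj cA cA) mA (qsnd cA ≫ S) (pfst cA ≫ T)) := by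
  have hp := pfst_isComonHom cA
  constructor
  · intro h1
    calc cnv (tensorComonObj cA cA) mA (pfst cA ≫ T) (qsnd cA ≫ S)
        = cnv (tensorComonObj cA cA) mA (pfst cA ≫ cnv cA mA g (𝟙 A)) (qsnd cA ≫ S) := by
          rw [← hT]
      _ = cnv (tensorComonObj cA cA) mA
            (cnv (tensorComonObj cA cA) mA (pfst cA ≫ g) (pfst cA ≫ 𝟙 A)) (qsnd cA ≫ S) := by
          rw [cnv_precomp mA hp]
      _ = cnv (tensorComonObj cA cA) mA
            (cnv (tensorComonObj cA cA) mA (pfst cA ≫ g) (pfst cA)) (qsnd cA ≫ S) := by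
          rw [comp_id]
      _ = cnv (tensorComonObj cA cA) mA (pfst cA ≫ g)
            (cnv (tensorComonObj cA cA) mA (pfst cA) (qsnd cA ≫ S)) := cnv_assoc _ _ _ _ _
      _ = cnv (tensorComonObj cA cA) mA (pfst cA ≫ g)
            (cnv (tensorComonObj cA cA) mA (pfst cA ≫ f)
              (cnv (tensorComonObj cA cA) mA (qsnd cA ≫ S) (pfst cA ≫ T))) := by rw [h1]
      _ = cnv (tensorComonObj cA cA) mA
            (cnv (tensorComonObj cA cA) mA (pfst cA ≫ g) (pfst cA ≫ f))
            (cnv (tensorComonObj cA cA) mA (qsnd cA ≫ S) (pfst cA ≫ T)) :=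
          (cnv_assoc _ _ _ _ _).symm
      _ = cnv (tensorComonObj cA cA) mA (pfst cA ≫ cnv cA mA g f)
            (cnv (tensorComonObj cA cA) mA (qsnd cA ≫ S) (pfst cA ≫ T)) := by
          rw [cnv_precomp mA hp]
      _ = cnv (tensorComonObj cA cA) mA (pfst cA ≫ (cA.counit ≫ mA.one))
            (cnv (tensorComonObj cA cA) mA (qsnd cA ≫ S) (pfst cA ≫ T)) := by rw [hK2]
      _ = cnv (tensorComonObj cA cA) mA ((tensorComonObj cA cA).counit ≫ mA.one)
            (cnv (tensorComonObj cA cA) mA (qsnd cA ≫ S) (pfst cA ≫ T)) := by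
          rw [← Category.assoc, pfst_counit]
      _ = cnv (tensorComonObj cA cA) mA (qsnd cA ≫ S) (pfst cA ≫ T) := cnv_one_left _ _ _
  · intro h2
    symm
    calc cnv (tensorComonObj cA cA) mA (pfst cA ≫ f)
          (cnv (tensorComonObj cA cA) mA (qsnd cA ≫ S) (pfst cA ≫ T))
        = cnv (tensorComonObj cA cA) mA (pfst cA ≫ f)
            (cnv (tensorComonObj cA cA) mA (pfst cA ≫ T) (qsnd cA ≫ S)) := by rw [h2]
      _ = cnv (tensorComonObj cA cA) mA
            (cnv (tensorComonObj cA cA) mA (pfst cA ≫ f) (pfst cA ≫ T)) (qsnd cA ≫ S) :=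
          (cnv_assoc _ _ _ _ _).symm
      _ = cnv (tensorComonObj cA cA) mA (pfst cA ≫ cnv cA mA f T) (qsnd cA ≫ S) := by
          rw [cnv_precomp mA hp]
      _ = cnv (tensorComonObj cA cA) mA (pfst cA ≫ 𝟙 A) (qsnd cA ≫ S) := by rw [hFT]
      _ = cnv (tensorComonObj cA cA) mA (pfst cA) (qsnd cA ≫ S) := by rw [comp_id]

end HopfLemmas

lemma braid_bridge [SymmetricCategory C] {A : C} (m : A ⊗ A ⟶ A) (S T : A ⟶ A) :
    ((S ⊗ₘ T) ≫ (β_ A A).hom ≫ m = (S ⊗ₘ T) ≫ m) ↔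
      ((T ⊗ₘ S) ≫ m = (T ⊗ₘ S) ≫ (β_ A A).hom ≫ m) := by
  constructor
  · intro h
    rw [← cancel_epi (β_ A A).hom, ← BraidedCategory.braiding_naturality_assoc,
      ← BraidedCategory.braiding_naturality_assoc, SymmetricCategory.symmetry_assoc, h]
  · intro h
    rw [← cancel_epi (β_ A A).hom, ← BraidedCategory.braiding_naturality_assoc,
      ← BraidedCategory.braiding_naturality_assoc, SymmetricCategory.symmetry_assoc, h]

theorem statement7 [SymmetricCategory C] {A B : C}
    (MA : BimonObj' A) (MB : BimonObj' B) (z : B ⟶ B) (hz : IsAntipode MB z)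
    (s t : A ⟶ B) (i : B ⟶ A)
    (hs : IsBimonHom MA MB s) (ht : IsBimonHom MA MB t) (hi : IsBimonHom MB MA i)
    (hsi : i ≫ s = 𝟙 B) (hti : i ≫ t = 𝟙 B)
    (hcs : MA.comul ≫ (s ▷ A) ≫ (β_ B A).hom = MA.comul ≫ (A ◁ s))
    (hct : MA.comul ≫ (t ▷ A) = MA.comul ≫ (β_ A A).hom ≫ (t ▷ A)) :
    ((A ◁ (MA.comul ≫ (A ◁ (s ≫ z ≫ i)) ≫ MA.mul)) ≫ MA.mul =
      (MA.comul ▷ A) ≫ (((t ≫ i) ▷ A) ▷ A) ≫ (α_ A A A).hom ≫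
        (A ◁ (β_ A A).hom) ≫
        (A ◁ ((MA.comul ≫ (A ◁ (s ≫ z ≫ i)) ≫ MA.mul) ⊗ₘ
          (MA.comul ≫ ((t ≫ z ≫ i) ▷ A) ≫ MA.mul))) ≫
        (A ◁ MA.mul) ≫ MA.mul) ↔
    ((MA.comul ≫ (A ◁ (s ≫ z ≫ i)) ≫ MA.mul) ⊗ₘ
        (MA.comul ≫ ((t ≫ z ≫ i) ▷ A) ≫ MA.mul)) ≫ (β_ A A).hom ≫ MA.mul =
      ((MA.comul ≫ (A ◁ (s ≫ z ≫ i)) ≫ MA.mul) ⊗ₘ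
        (MA.comul ≫ ((t ≫ z ≫ i) ▷ A) ≫ MA.mul)) ≫ MA.mul := by
  have eT : (MA.comul ≫ ((t ≫ z ≫ i) ▷ A) ≫ MA.mul) =
      cnv MA.toComonObj MA.toMonObj (t ≫ z ≫ i) (𝟙 A) := by
    rw [cnv, tensorHom_id]
  have hFT : cnv MA.toComonObj MA.toMonObj (t ≫ i)
      (MA.comul ≫ ((t ≫ z ≫ i) ▷ A) ≫ MA.mul) = 𝟙 A := by
    rw [eT, ← cnv_assoc, cnv_ti_tzi MA MB z t i hz.2 ht.2 hi.1, cnv_one_left]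
  have key := abstract_iff MA.toComonObj MA.toMonObj (t ≫ i) (t ≫ z ≫ i)
    (MA.comul ≫ (A ◁ (s ≫ z ≫ i)) ≫ MA.mul)
    (MA.comul ≫ ((t ≫ z ≫ i) ▷ A) ≫ MA.mul)
    eT hFT (cnv_tzi_ti MA MB z t i hz.1 ht.2 hi.1)
  rw [← cnv_p_q MA.toComonObj MA.toMonObj (MA.comul ≫ (A ◁ (s ≫ z ≫ i)) ≫ MA.mul),
    ← cnv_big MA.toComonObj MA.toMonObj (t ≫ i)
      (MA.comul ≫ (A ◁ (s ≫ z ≫ i)) ≫ MA.mul)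
      (MA.comul ≫ ((t ≫ z ≫ i) ▷ A) ≫ MA.mul),
    key,
    cnv_pf_qg MA.toComonObj MA.toMonObj
      (MA.comul ≫ ((t ≫ z ≫ i) ▷ A) ≫ MA.mul)
      (MA.comul ≫ (A ◁ (s ≫ z ≫ i)) ≫ MA.mul),
    cnv_qg_pf MA.toComonObj MA.toMonObj
      (MA.comul ≫ ((t ≫ z ≫ i) ▷ A) ≫ MA.mul)
      (MA.comul ≫ (A ◁ (s ≫ z ≫ i)) ≫ MA.mul)]
  exact (braid_bridge MA.mul (MA.comul ≫ (A ◁ (s ≫ z ≫ i)) ≫ MA.mul)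
    (MA.comul ≫ ((t ≫ z ≫ i) ▷ A) ≫ MA.mul)).symm
end

section
/- Let B and Y be bimonoids in M with B cocommutative, and let x : B⊗Y → Y⊗B be a distributive law from the monoid B to the monoid Y satisfying (ε_Y⊗1_B)∘x = 1_B⊗ε_Y (as morphisms B⊗Y → B, suppressing unitors). Then l := (1_Y⊗ε_B)∘x : B⊗Y → Y is a left action of B on Y: l∘(u_B⊗1_Y) = 1_Y and l∘(m_B⊗1_Y) = l∘(1_B⊗l). -/
open CategoryTheory Category MonoidalCategory Limits

universe v u

variable {C : Type u} [Category.{v} C] [MonoidalCategory C]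

/-- `l` is a left action of the monoid `B` on `Y`. -/
def IsAction {B Y : C} (MB : MonObj' B) (l : B ⊗ Y ⟶ Y) : Prop :=
  (MB.one ▷ Y) ≫ l = (λ_ Y).hom ∧
    (MB.mul ▷ Y) ≫ l = (α_ B B Y).hom ≫ (B ◁ l) ≫ l

/-- The action `l` makes the monoid `Y` a `B`-module monoid. -/
def IsModuleMonoid [BraidedCategory C] {B Y : C} (MB : BimonObj' B) (MY : MonObj' Y)
    (l : B ⊗ Y ⟶ Y) : Prop :=
  (ρ_ B).inv ≫ (B ◁ MY.one) ≫ l = MB.counit ≫ MY.one ∧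
    (B ◁ MY.mul) ≫ l = (MB.comul ▷ (Y ⊗ Y)) ≫ mid4 B B Y Y ≫ (l ⊗ₘ l) ≫ MY.mul

/-- The action `l` makes the comonoid `Y` a `B`-module comonoid. -/
def IsModuleComonoid [BraidedCategory C] {B Y : C} (MB : BimonObj' B) (MY : ComonObj' Y)
    (l : B ⊗ Y ⟶ Y) : Prop :=
  l ≫ MY.counit = (MB.counit ⊗ₘ MY.counit) ≫ (λ_ (𝟙_ C)).hom ∧
    l ≫ MY.comul = (MB.comul ⊗ₘ MY.comul) ≫ mid4 B B Y Y ≫ (l ⊗ₘ l)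

/-- `x` is a distributive law from the monoid `B` to the monoid `Y`. -/
def IsDistLaw {B Y : C} (MB : MonObj' B) (MY : MonObj' Y) (x : B ⊗ Y ⟶ Y ⊗ B) : Prop :=
  (λ_ Y).inv ≫ (MB.one ▷ Y) ≫ x = (ρ_ Y).inv ≫ (Y ◁ MB.one) ∧
  (ρ_ B).inv ≫ (B ◁ MY.one) ≫ x = (λ_ B).inv ≫ (MY.one ▷ B) ∧
  (MB.mul ▷ Y) ≫ x =
    (α_ B B Y).hom ≫ (B ◁ x) ≫ (α_ B Y B).inv ≫ (x ▷ B) ≫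
      (α_ Y B B).hom ≫ (Y ◁ MB.mul) ∧
  (B ◁ MY.mul) ≫ x =
    (α_ B Y Y).inv ≫ (x ▷ Y) ≫ (α_ Y B Y).hom ≫ (Y ◁ x) ≫
      (α_ Y Y B).inv ≫ (MY.mul ▷ B)

theorem statement10 [SymmetricCategory C] {B Y : C}
    (MB : BimonObj' B) (hcoc : IsCocomm MB.toComonObj)
    (MY : BimonObj' Y)
    (x : B ⊗ Y ⟶ Y ⊗ B) (hx : IsDistLaw MB.toMonObj MY.toMonObj x)
    (hxe : x ≫ (MY.counit ▷ B) ≫ (λ_ B).hom = (B ◁ MY.counit) ≫ (ρ_ B).hom) :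
    IsAction MB.toMonObj (x ≫ (Y ◁ MB.counit) ≫ (ρ_ Y).hom) := by
  obtain ⟨h1, h2, h3, h4⟩ := hx
  constructor
  · have h1' : (MB.one ▷ Y) ≫ x = (λ_ Y).hom ≫ (ρ_ Y).inv ≫ (Y ◁ MB.one) := by
      rw [← cancel_epi (λ_ Y).inv, h1]; simp
    rw [reassoc_of% h1']
    slice_lhs 3 4 => rw [← MonoidalCategory.whiskerLeft_comp, MB.one_counit]
    simp
  · rw [reassoc_of% h3]
    have hmc : (Y ◁ MB.mul) ≫ (Y ◁ MB.counit) =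
        (Y ◁ (MB.counit ⊗ₘ MB.counit)) ≫ (Y ◁ (λ_ (𝟙_ C)).hom) := by
      rw [← MonoidalCategory.whiskerLeft_comp, MB.mul_counit,
        MonoidalCategory.whiskerLeft_comp]
    slice_lhs 6 7 => rw [hmc]
    -- split ε ⊗ ε as (B ◁ ε) ≫ (ε ▷ 𝟙)
    rw [tensorHom_def' MB.counit MB.counit, MonoidalCategory.whiskerLeft_comp]
    -- LHS now: α ≫ B◁x ≫ α⁻¹ ≫ x▷B ≫ α ≫ Y◁(B◁ε) ≫ Y◁(ε▷𝟙) ≫ Y◁λ ≫ ρ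
    have e2 : (MB.counit ▷ (𝟙_ C)) ≫ (λ_ (𝟙_ C)).hom = (ρ_ B).hom ≫ MB.counit := by
      rw [unitors_equal, rightUnitor_naturality]
    slice_lhs 7 8 => rw [← MonoidalCategory.whiskerLeft_comp, e2,
      MonoidalCategory.whiskerLeft_comp]
    -- LHS now: α ≫ B◁x ≫ α⁻¹ ≫ x▷B ≫ α ≫ Y◁(B◁ε) ≫ Y◁ρ_B ≫ Y◁ε ≫ ρ
    slice_lhs 5 6 => rw [← associator_naturality_right]
    slice_lhs 6 7 => rw [← rightUnitor_tensor_hom]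
    -- LHS now: α ≫ B◁x ≫ α⁻¹ ≫ x▷B ≫ (Y⊗B)◁ε ≫ ρ_{Y⊗B} ≫ Y◁ε ≫ ρ
    slice_lhs 4 5 => rw [← whisker_exchange]
    slice_lhs 5 6 => rw [rightUnitor_naturality]
    -- LHS now: α ≫ B◁x ≫ α⁻¹ ≫ (B⊗Y)◁ε ≫ ρ_{B⊗Y} ≫ x ≫ Y◁ε ≫ ρ
    slice_lhs 3 4 => rw [← associator_inv_naturality_right]
    slice_lhs 4 5 => rw [rightUnitor_tensor_hom, Iso.inv_hom_id_assoc]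
    simp [MonoidalCategory.whiskerLeft_comp]
end
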